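/- Consider the bilinear game min_θ max_φ θᵀMφ with M a full-rank real n×n matrix, whose unique stationary point is (θ*, φ*) = (0, 0). For any η > 0, if the sequence (θ_t, φ_t)_{t≥0} satisfies the SPPM recursion θ_{t+1} = θ_t − ηMφ_{t+1}, φ_{t+1} = φ_t + ηMᵀθ_{t+1}, then with r_t = ‖θ_t‖² + ‖φ_t‖² one has r_{t+1} ≤ r_t / (1 + η² λ_min(MᵀM)) for all t; since λ_min(MᵀM) > 0, the iterates converge linearly to (0, 0). -/

import Mathlib

open Matrix Filter Topology

/-- The squared Euclidean norm of a vector `v : ι → ℝ`. -/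
noncomputable def eNormSq {ι : Type*} [Fintype ι] (v : ι → ℝ) : ℝ :=
  ‖(EuclideanSpace.equiv ι ℝ).symm v‖ ^ 2

lemma eNormSq_eq_dot {ι : Type*} [Fintype ι] (v : ι → ℝ) : eNormSq v = v ⬝ᵥ v := by
  rw [eNormSq, EuclideanSpace.norm_eq, Real.sq_sqrt (by positivity)]
  simp [dotProduct, sq]

lemma dot_self_nonneg {ι : Type*} [Fintype ι] (v : ι → ℝ) : 0 ≤ v ⬝ᵥ v := by
  rw [← eNormSq_eq_dot, eNormSq]; positivity

/-- Cauchy–Schwarz for the real dot product. -/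
lemma dot_le_sqrt {ι : Type*} [Fintype ι] (x y : ι → ℝ) :
    x ⬝ᵥ y ≤ Real.sqrt (x ⬝ᵥ x) * Real.sqrt (y ⬝ᵥ y) := by
  set x' : EuclideanSpace ℝ ι := (EuclideanSpace.equiv ι ℝ).symm x
  set y' : EuclideanSpace ℝ ι := (EuclideanSpace.equiv ι ℝ).symm y
  have hx : Real.sqrt (x ⬝ᵥ x) = ‖x'‖ := by
    rw [← eNormSq_eq_dot, eNormSq, Real.sqrt_sq (norm_nonneg _)]
  have hy : Real.sqrt (y ⬝ᵥ y) = ‖y'‖ := by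
    rw [← eNormSq_eq_dot, eNormSq, Real.sqrt_sq (norm_nonneg _)]
  have hinner : (inner ℝ x' y' : ℝ) = x ⬝ᵥ y := by
    simp [x', y', PiLp.inner_apply, RCLike.inner_apply, dotProduct, conj_trivial, mul_comm]
  rw [hx, hy, ← hinner]
  exact real_inner_le_norm x' y'

/-- Rayleigh-type lower bound: if all eigenvalues of the Hermitian matrix `A` are at least `c`,
then `x ⬝ᵥ (A *ᵥ x) ≥ c * (x ⬝ᵥ x)`. -/
lemma rayleigh_lower {m : Type*} [Fintype m] [DecidableEq m]
    (A : Matrix m m ℝ) (hA : A.IsHermitian) {c : ℝ}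
    (hc : ∀ i, c ≤ hA.eigenvalues i) (x : m → ℝ) :
    c * (x ⬝ᵥ x) ≤ x ⬝ᵥ (A *ᵥ x) := by
  have hsub : (A - c • (1 : Matrix m m ℝ)).PosSemidef := by
    have h1 : (c • (1 : Matrix m m ℝ)) =
        (hA.eigenvectorUnitary : Matrix m m ℝ) * (c • 1) *
          (star hA.eigenvectorUnitary : Matrix m m ℝ) := by
      have hUU : (hA.eigenvectorUnitary : Matrix m m ℝ) *
          star (hA.eigenvectorUnitary : Matrix m m ℝ) = 1 := by
        rw [← Unitary.coe_star]
        exact Unitary.coe_mul_star_self _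
      rw [Matrix.mul_smul, Matrix.smul_mul, mul_one, hUU]
    have h2 : A - c • (1 : Matrix m m ℝ) =
        (hA.eigenvectorUnitary : Matrix m m ℝ) *
          (diagonal (fun i => hA.eigenvalues i - c)) *
          ((hA.eigenvectorUnitary : Matrix m m ℝ))ᴴ := by
      conv_lhs => rw [hA.spectral_theorem, Unitary.conjStarAlgAut_apply, h1]
      rw [← Matrix.star_eq_conjTranspose]
      rw [← Matrix.sub_mul, ← Matrix.mul_sub]
      congr 2
      rw [smul_one_eq_diagonal, diagonal_sub]
      simp [Function.comp]
    rw [h2]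
    exact (posSemidef_diagonal_iff.mpr fun i => sub_nonneg.2 (hc i)).mul_mul_conjTranspose_same _
  have h := hsub.dotProduct_mulVec_nonneg x
  simp only [star_trivial, sub_mulVec, dotProduct_sub, smul_mulVec, one_mulVec,
    dotProduct_smul, smul_eq_mul] at h
  linarith

/-- `(M *ᵥ x) ⬝ᵥ (M *ᵥ x) = x ⬝ᵥ ((Mᵀ * M) *ᵥ x)`. -/
lemma dot_mulVec_self {m : Type*} [Fintype m] (M : Matrix m m ℝ) (x : m → ℝ) :
    (M *ᵥ x) ⬝ᵥ (M *ᵥ x) = x ⬝ᵥ ((Mᵀ * M) *ᵥ x) := by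
  rw [← mulVec_mulVec, dotProduct_mulVec, ← mulVec_transpose, dotProduct_comm, dotProduct_mulVec,
    ← mulVec_transpose, transpose_transpose, dotProduct_comm]

/-- global linear convergence of SPPM in the bilinear game (Theorem 3 of the
paper): `r_{t+1} ≤ r_t/(1 + η²λ_min(MᵀM))`, `λ_min(MᵀM) > 0`, and the iterates converge to the
unique stationary point `(0, 0)`. -/
theorem bilinear_sppm_linear_convergence
    (n : ℕ) (M : Matrix (Fin n) (Fin n) ℝ) (hM : IsUnit M) (η : ℝ) (hη : 0 < η)
    (hMtM : (Mᵀ * M).IsHermitian) (lmin : ℝ)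
    (hlmin : IsLeast (Set.range hMtM.eigenvalues) lmin)
    (Θ Φ : ℕ → Fin n → ℝ)
    (hΘ : ∀ t : ℕ, Θ (t + 1) = Θ t - η • (M *ᵥ Φ (t + 1)))
    (hΦ : ∀ t : ℕ, Φ (t + 1) = Φ t + η • (Mᵀ *ᵥ Θ (t + 1)))
    (r : ℕ → ℝ) (hr : ∀ t, r t = eNormSq (Θ t) + eNormSq (Φ t)) :
    0 < lmin ∧
    (∀ t : ℕ, r (t + 1) ≤ r t / (1 + η ^ 2 * lmin)) ∧
    Tendsto (fun t => (Θ t, Φ t)) atTop (𝓝 (0, 0)) := by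
  have hdet : IsUnit M.det := (Matrix.isUnit_iff_isUnit_det M).1 hM
  -- `MᵀM` is positive definite.
  have hPD : (Mᵀ * M).PosDef := by
    refine Matrix.PosDef.of_dotProduct_mulVec_pos hMtM fun x hx => ?_
    rw [star_trivial, ← dot_mulVec_self]
    have hMx : M *ᵥ x ≠ 0 := by
      intro h
      exact hx (Matrix.mulVec_injective_iff_isUnit.mpr hM (by simpa using h))
    have := dot_self_nonneg (M *ᵥ x)
    rcases this.lt_or_eq with h | h
    · exact h
    · exfalso
      apply hMx
      have hsum : ∑ i, (M *ᵥ x) i * (M *ᵥ x) i = 0 := h.symm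
      funext i
      have := Finset.sum_eq_zero_iff_of_nonneg
        (fun i _ => mul_self_nonneg ((M *ᵥ x) i)) |>.mp hsum i (Finset.mem_univ i)
      simpa [mul_self_eq_zero] using this
  -- all eigenvalues are at least `lmin`, and `lmin > 0`.
  have hcle : ∀ i, lmin ≤ hMtM.eigenvalues i := fun i => hlmin.2 ⟨i, rfl⟩
  obtain ⟨i₀, hi₀⟩ := hlmin.1
  have hlmin_pos : 0 < lmin := hi₀ ▸ hPD.eigenvalues_pos i₀
  -- key bound for `M`.
  have keyM : ∀ x : Fin n → ℝ, lmin * (x ⬝ᵥ x) ≤ (M *ᵥ x) ⬝ᵥ (M *ᵥ x) := by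
    intro x
    rw [dot_mulVec_self]
    exact rayleigh_lower _ hMtM hcle x
  -- key bound for `Mᵀ`, via Cauchy–Schwarz and the inverse matrix.
  have keyMt : ∀ x : Fin n → ℝ, lmin * (x ⬝ᵥ x) ≤ (Mᵀ *ᵥ x) ⬝ᵥ (Mᵀ *ᵥ x) := by
    intro u
    set B : Matrix (Fin n) (Fin n) ℝ := M⁻¹ with hB
    have hBM : Bᵀ *ᵥ (Mᵀ *ᵥ u) = u := by
      rw [mulVec_mulVec, ← Matrix.transpose_mul, Matrix.mul_nonsing_inv _ hdet]
      simp
    -- from keyM: `lmin * (B w ⬝ B w) ≤ w ⬝ w` for all `w`.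
    have hq : ∀ w : Fin n → ℝ, lmin * ((B *ᵥ w) ⬝ᵥ (B *ᵥ w)) ≤ w ⬝ᵥ w := by
      intro w
      have h := keyM (B *ᵥ w)
      rwa [mulVec_mulVec, Matrix.mul_nonsing_inv _ hdet, one_mulVec] at h
    -- show `lmin * (Bᵀ v ⬝ Bᵀ v) ≤ v ⬝ v` for all `v`; apply with `v = Mᵀ u`.
    have hqt : ∀ v : Fin n → ℝ, lmin * ((Bᵀ *ᵥ v) ⬝ᵥ (Bᵀ *ᵥ v)) ≤ v ⬝ᵥ v := by
      intro v
      set s : ℝ := (Bᵀ *ᵥ v) ⬝ᵥ (Bᵀ *ᵥ v) with hs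
      have hs0 : 0 ≤ s := dot_self_nonneg _
      rcases hs0.eq_or_lt with h0 | hspos
      · rw [← h0, mul_zero]; exact dot_self_nonneg v
      -- `s = v ⬝ (B (Bᵀ v))`
      have hrep : s = v ⬝ᵥ (B *ᵥ (Bᵀ *ᵥ v)) := by
        rw [hs, dotProduct_mulVec (v := Bᵀ *ᵥ v), ← mulVec_transpose, transpose_transpose,
          dotProduct_comm]
      have hCS : s ≤ Real.sqrt (v ⬝ᵥ v) * Real.sqrt ((B *ᵥ (Bᵀ *ᵥ v)) ⬝ᵥ (B *ᵥ (Bᵀ *ᵥ v))) := by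
        rw [hrep]; exact dot_le_sqrt _ _
      have hBB : (B *ᵥ (Bᵀ *ᵥ v)) ⬝ᵥ (B *ᵥ (Bᵀ *ᵥ v)) ≤ s / lmin := by
        have := hq (Bᵀ *ᵥ v)
        rw [← hs] at this
        rw [le_div_iff₀ hlmin_pos]
        linarith [this]
      have hCS2 : s ≤ Real.sqrt (v ⬝ᵥ v) * Real.sqrt (s / lmin) :=
        hCS.trans (by
          have := Real.sqrt_le_sqrt hBB
          exact mul_le_mul_of_nonneg_left this (Real.sqrt_nonneg _))
      -- square both sides
      have hsq : s ^ 2 ≤ (v ⬝ᵥ v) * (s / lmin) := by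
        have h1 : Real.sqrt (v ⬝ᵥ v) * Real.sqrt (s / lmin)
            = Real.sqrt ((v ⬝ᵥ v) * (s / lmin)) := (Real.sqrt_mul (dot_self_nonneg v) _).symm
        rw [h1] at hCS2
        exact (Real.le_sqrt hs0 (mul_nonneg (dot_self_nonneg v) (by positivity))).mp hCS2
      have : s * lmin ≤ v ⬝ᵥ v := by
        have h3 : s ^ 2 * lmin ≤ (v ⬝ᵥ v) * s := by
          have h4 := mul_le_mul_of_nonneg_right hsq hlmin_pos.le
          rw [mul_assoc, div_mul_cancel₀ _ (ne_of_gt hlmin_pos)] at h4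
          exact h4
        have h5 : s * (s * lmin) ≤ s * (v ⬝ᵥ v) := by nlinarith [h3]
        exact le_of_mul_le_mul_left h5 hspos
      linarith
    have := hqt (Mᵀ *ᵥ u)
    rwa [hBM] at this
  -- the contraction inequality.
  have hcontr : ∀ t : ℕ, (1 + η ^ 2 * lmin) * r (t + 1) ≤ r t := by
    intro t
    set a := Θ (t + 1) with ha
    set b := Φ (t + 1) with hb
    have hΘt : Θ t = a + η • (M *ᵥ b) := by
      have := hΘ t
      rw [← ha, ← hb] at this
      rw [this]; abel
    have hΦt : Φ t = b - η • (Mᵀ *ᵥ a) := by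
      have := hΦ t
      rw [← ha, ← hb] at this
      rw [this]; abel
    have hcross : a ⬝ᵥ (M *ᵥ b) = b ⬝ᵥ (Mᵀ *ᵥ a) := by
      rw [dotProduct_mulVec, ← mulVec_transpose, dotProduct_comm]
    have e1 : eNormSq (Θ t) = a ⬝ᵥ a + 2 * η * (a ⬝ᵥ (M *ᵥ b))
        + η ^ 2 * ((M *ᵥ b) ⬝ᵥ (M *ᵥ b)) := by
      rw [hΘt, eNormSq_eq_dot, dotProduct_add, add_dotProduct, add_dotProduct,
        dotProduct_smul, smul_dotProduct, smul_dotProduct, dotProduct_smul, dotProduct_comm (M *ᵥ b) a]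
      simp only [smul_eq_mul]; ring
    have e2 : eNormSq (Φ t) = b ⬝ᵥ b - 2 * η * (b ⬝ᵥ (Mᵀ *ᵥ a))
        + η ^ 2 * ((Mᵀ *ᵥ a) ⬝ᵥ (Mᵀ *ᵥ a)) := by
      rw [hΦt, eNormSq_eq_dot, dotProduct_sub, sub_dotProduct, sub_dotProduct,
        dotProduct_smul, smul_dotProduct, smul_dotProduct, dotProduct_smul, dotProduct_comm (Mᵀ *ᵥ a) b]
      simp only [smul_eq_mul]; ring
    have hrt : r t = r (t + 1) + η ^ 2 * (((M *ᵥ b) ⬝ᵥ (M *ᵥ b)) + ((Mᵀ *ᵥ a) ⬝ᵥ (Mᵀ *ᵥ a))) := by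
      rw [hr t, hr (t + 1), e1, e2, hcross, eNormSq_eq_dot a, eNormSq_eq_dot b]
      ring
    have h1 := keyM b
    have h2 := keyMt a
    rw [hrt, hr (t + 1), eNormSq_eq_dot a, eNormSq_eq_dot b]
    nlinarith [sq_nonneg η]
  have hden : (0 : ℝ) < 1 + η ^ 2 * lmin := by positivity
  have hstep : ∀ t : ℕ, r (t + 1) ≤ r t / (1 + η ^ 2 * lmin) := by
    intro t
    rw [le_div_iff₀ hden, mul_comm]
    exact hcontr t
  refine ⟨hlmin_pos, hstep, ?_⟩
  -- convergence
  have hrnonneg : ∀ t, 0 ≤ r t := by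
    intro t
    rw [hr t, eNormSq, eNormSq]; positivity
  set q : ℝ := 1 / (1 + η ^ 2 * lmin) with hqdef
  have hq0 : 0 ≤ q := by positivity
  have hq1 : q < 1 := by
    rw [hqdef, div_lt_one hden]
    have : 0 < η ^ 2 * lmin := by positivity
    linarith
  have hgeo : ∀ t, r t ≤ r 0 * q ^ t := by
    intro t
    induction t with
    | zero => simp
    | succ t ih =>
      calc r (t + 1) ≤ r t / (1 + η ^ 2 * lmin) := hstep t
        _ = r t * q := by rw [hqdef]; ring
        _ ≤ (r 0 * q ^ t) * q := mul_le_mul_of_nonneg_right ih hq0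
        _ = r 0 * q ^ (t + 1) := by ring
  have hrtend : Tendsto r atTop (𝓝 0) := by
    apply squeeze_zero hrnonneg hgeo ?_
    have := (tendsto_pow_atTop_nhds_zero_of_lt_one hq0 hq1).const_mul (r 0)
    simpa using this
  -- transfer to the iterates
  have htendvec : ∀ (V : ℕ → Fin n → ℝ), (∀ t, eNormSq (V t) ≤ r t) →
      Tendsto V atTop (𝓝 0) := by
    intro V hV
    set V' : ℕ → EuclideanSpace ℝ (Fin n) := fun t => (EuclideanSpace.equiv (Fin n) ℝ).symm (V t)
    have hnorm : Tendsto (fun t => ‖V' t‖) atTop (𝓝 0) := by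
      refine squeeze_zero (g := fun t => Real.sqrt (r t)) (fun t => norm_nonneg _)
        (fun t => ?_) ?_
      · have hEq : ‖V' t‖ = Real.sqrt (eNormSq (V t)) := by
          rw [eNormSq, Real.sqrt_sq (norm_nonneg _)]
        rw [hEq]
        exact Real.sqrt_le_sqrt (hV t)
      · have h := (Real.continuous_sqrt.tendsto 0).comp hrtend
        simpa [Function.comp_def] using h
    have hV' : Tendsto V' atTop (𝓝 0) := tendsto_zero_iff_norm_tendsto_zero.mpr hnorm
    have hcont : Tendsto (fun t => (EuclideanSpace.equiv (Fin n) ℝ) (V' t)) atTop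
        (𝓝 ((EuclideanSpace.equiv (Fin n) ℝ) 0)) :=
      ((EuclideanSpace.equiv (Fin n) ℝ).continuous.tendsto 0).comp hV'
    simpa only [V', ContinuousLinearEquiv.apply_symm_apply, map_zero] using hcont
  have hΘle : ∀ t, eNormSq (Θ t) ≤ r t := by
    intro t; rw [hr t]; have : 0 ≤ eNormSq (Φ t) := by rw [eNormSq]; positivity
    linarith
  have hΦle : ∀ t, eNormSq (Φ t) ≤ r t := by
    intro t; rw [hr t]; have : 0 ≤ eNormSq (Θ t) := by rw [eNormSq]; positivity
    linarith
  exact (htendvec Θ hΘle).prodMk_nhds (htendvec Φ hΦle)
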